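/- There is a short exact sequence 0 → H^1(N_0, D̄) → H^1(C, D) → ker(ρ_1)/B^1(C^{0,•}, D_{0,1}) → 0, where the first map is induced by inclusion of the null subcomplex N_0 into C and the second by the projection π_1 onto the (0,1)-component. -/
import Mathlib


open DirectSum

variable {R M : Type} [CommRing R] [AddCommGroup M] [Module R M]

/-- Projection `π_q` of a bigraded module onto the part of second degree `≥ q`,
along the bigrading. -/
noncomputable def bproj (𝒞 : ℤ × ℤ → Submodule R M) [DirectSum.Decomposition 𝒞] (q : ℤ) :
    M →ₗ[R] M :=
  (DirectSum.coeLinearMap 𝒞).comp <|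
    (DFinsupp.filterLinearMap R (fun pq : ℤ × ℤ => 𝒞 pq) (fun pq => q ≤ pq.2)).comp
      (DirectSum.decomposeLinearEquiv 𝒞).toLinearMap

/-- The bihomogeneous component of bidegree `(p, q)` of an element. -/
noncomputable def bcomp (𝒞 : ℤ × ℤ → Submodule R M) [DirectSum.Decomposition 𝒞] (p q : ℤ)
    (x : M) : M :=
  (DirectSum.decompose 𝒞 x (p, q) : M)

/-- The total-degree-`k` part `C^k = ⊕_{p+q=k} C^{p,q}`. -/
def bdeg (𝒞 : ℤ × ℤ → Submodule R M) (k : ℤ) : Submodule R M :=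
  ⨆ p : ℤ, 𝒞 (p, k - p)

/-- The part of second degree `q`, `⊕_p C^{p,q}`. -/
def brow (𝒞 : ℤ × ℤ → Submodule R M) (q : ℤ) : Submodule R M :=
  ⨆ p : ℤ, 𝒞 (p, q)

/-- The decreasing column filtration `F^p C = ⊕_{i ≥ p, j} C^{i,j}`. -/
def bfil (𝒞 : ℤ × ℤ → Submodule R M) (p : ℤ) : Submodule R M :=
  ⨆ (i : ℤ) (_ : p ≤ i) (j : ℤ), 𝒞 (i, j)

lemma bproj_eq (𝒞 : ℤ × ℤ → Submodule R M) [DirectSum.Decomposition 𝒞] (r : ℤ) (x : M) :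
    bproj 𝒞 r x = (DirectSum.coeLinearMap 𝒞)
      (DFinsupp.filter (fun pq : ℤ × ℤ => r ≤ pq.2) (DirectSum.decompose 𝒞 x)) := rfl

lemma bproj_of_mem (𝒞 : ℤ × ℤ → Submodule R M) [DirectSum.Decomposition 𝒞] {p q : ℤ} {x : M}
    (hx : x ∈ 𝒞 (p, q)) (r : ℤ) : bproj 𝒞 r x = if r ≤ q then x else 0 := by
  rw [bproj_eq, DirectSum.decompose_of_mem 𝒞 hx]
  rw [show (DirectSum.of (fun pq : ℤ×ℤ => 𝒞 pq) (p,q) ⟨x, hx⟩)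
      = DFinsupp.single (p,q) ⟨x,hx⟩ from rfl]
  rw [DFinsupp.filter_single]
  split_ifs with h
  · exact DirectSum.coeLinearMap_of 𝒞 _ _
  · simp

lemma bcomp_of_mem (𝒞 : ℤ × ℤ → Submodule R M) [DirectSum.Decomposition 𝒞] {p q p' q' : ℤ} {x : M}
    (hx : x ∈ 𝒞 (p, q)) : bcomp 𝒞 p' q' x = if (p, q) = (p', q') then x else 0 := by
  unfold bcomp
  split_ifs with h
  · rw [← h]; exact DirectSum.decompose_of_mem_same 𝒞 hx
  · exact DirectSum.decompose_of_mem_ne 𝒞 hx h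

lemma bcomp_add (𝒞 : ℤ × ℤ → Submodule R M) [DirectSum.Decomposition 𝒞] (p q : ℤ) (x y : M) :
    bcomp 𝒞 p q (x + y) = bcomp 𝒞 p q x + bcomp 𝒞 p q y := by
  unfold bcomp
  rw [DirectSum.decompose_add]
  rfl

lemma bcomp_zero (𝒞 : ℤ × ℤ → Submodule R M) [DirectSum.Decomposition 𝒞] (p q : ℤ) :
    bcomp 𝒞 p q (0 : M) = 0 := by
  unfold bcomp
  rw [DirectSum.decompose_zero]
  rfl

lemma comp2_zero (𝒞 : ℤ × ℤ → Submodule R M) [DirectSum.Decomposition 𝒞]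
    {u v : M} {p1 q1 p2 q2 : ℤ}
    (hu : u ∈ 𝒞 (p1, q1)) (hv : v ∈ 𝒞 (p2, q2))
    (h12 : (p1, q1) ≠ (p2, q2)) (h : u + v = 0) : u = 0 ∧ v = 0 := by
  constructor
  · have c := congrArg (bcomp 𝒞 p1 q1) h
    rwa [bcomp_add, bcomp_of_mem 𝒞 hu, bcomp_of_mem 𝒞 hv, if_pos rfl,
      if_neg (fun e => h12 e.symm), add_zero, bcomp_zero] at c
  · have c := congrArg (bcomp 𝒞 p2 q2) h
    rwa [bcomp_add, bcomp_of_mem 𝒞 hu, bcomp_of_mem 𝒞 hv, if_pos rfl,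
      if_neg h12, zero_add, bcomp_zero] at c

lemma comp3_zero (𝒞 : ℤ × ℤ → Submodule R M) [DirectSum.Decomposition 𝒞]
    {u v w : M} {p1 q1 p2 q2 p3 q3 : ℤ}
    (hu : u ∈ 𝒞 (p1, q1)) (hv : v ∈ 𝒞 (p2, q2)) (hw : w ∈ 𝒞 (p3, q3))
    (h12 : (p1, q1) ≠ (p2, q2)) (h13 : (p1, q1) ≠ (p3, q3)) (h23 : (p2, q2) ≠ (p3, q3))
    (h : u + v + w = 0) : u = 0 ∧ v = 0 ∧ w = 0 := by
  refine ⟨?_, ?_, ?_⟩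
  · have c := congrArg (bcomp 𝒞 p1 q1) h
    rwa [bcomp_add, bcomp_add, bcomp_of_mem 𝒞 hu, bcomp_of_mem 𝒞 hv, bcomp_of_mem 𝒞 hw,
      if_pos rfl, if_neg (fun e => h12 e.symm), if_neg (fun e => h13 e.symm),
      add_zero, add_zero, bcomp_zero] at c
  · have c := congrArg (bcomp 𝒞 p2 q2) h
    rwa [bcomp_add, bcomp_add, bcomp_of_mem 𝒞 hu, bcomp_of_mem 𝒞 hv, bcomp_of_mem 𝒞 hw,
      if_pos rfl, if_neg h12, if_neg (fun e => h23 e.symm),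
      zero_add, add_zero, bcomp_zero] at c
  · have c := congrArg (bcomp 𝒞 p3 q3) h
    rwa [bcomp_add, bcomp_add, bcomp_of_mem 𝒞 hu, bcomp_of_mem 𝒞 hv, bcomp_of_mem 𝒞 hw,
      if_pos rfl, if_neg h13, if_neg h23, zero_add, zero_add, bcomp_zero] at c

theorem statement14
    (𝒞 : ℤ × ℤ → Submodule R M) [DirectSum.Decomposition 𝒞]
    (hfq : ∀ p q : ℤ, p < 0 ∨ q < 0 → 𝒞 (p, q) = ⊥)
    (D21 D10 D01 : M →ₗ[R] M)
    (h21 : ∀ p q : ℤ, (𝒞 (p, q)).map D21 ≤ 𝒞 (p + 2, q - 1))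
    (h10 : ∀ p q : ℤ, (𝒞 (p, q)).map D10 ≤ 𝒞 (p + 1, q))
    (h01 : ∀ p q : ℤ, (𝒞 (p, q)).map D01 ≤ 𝒞 (p, q + 1))
    (D : M →ₗ[R] M) (hDdef : D = D21 + D10 + D01) (hD : D ∘ₗ D = 0)
    (BN1 : Submodule R M) (hBN1 : BN1 = Submodule.map D10 (𝒞 (0, 0) ⊓ LinearMap.ker D01))
    (Bcol : Submodule R M) (hBcol : Bcol = Submodule.map D01 (𝒞 (0, 0)))
    (B1 : Submodule R M) (hB1 : B1 = Submodule.map D (bdeg 𝒞 0))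
    (ZN1 : Submodule R M) (hZN1 : ZN1 = 𝒞 (1, 0) ⊓ LinearMap.ker D10 ⊓ LinearMap.ker D01)
    (Z1 : Submodule R M) (hZ1 : Z1 = bdeg 𝒞 1 ⊓ LinearMap.ker D)
    -- `ker ρ₁`, described explicitly
    (Kρ : Submodule R M)
    (hKρ : (Kρ : Set M) = {Y : M | Y ∈ 𝒞 (0, 1) ∧ D01 Y = 0 ∧
      ∃ α ∈ 𝒞 (1, 0), D01 α + D10 Y = 0 ∧
        D21 Y + D10 α ∈ Submodule.map D10 (𝒞 (1, 0) ⊓ LinearMap.ker D01)}) :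
    -- there is a short exact sequence
    -- `0 → H¹(N₀,D̄) → H¹(C,D) → ker ρ₁ / B¹(C^{0,•},D_{0,1}) → 0`
    ∃ (f : (↥ZN1 ⧸ Submodule.comap ZN1.subtype BN1) →ₗ[R]
        (↥Z1 ⧸ Submodule.comap Z1.subtype B1))
      (g : (↥Z1 ⧸ Submodule.comap Z1.subtype B1) →ₗ[R]
        (↥Kρ ⧸ Submodule.comap Kρ.subtype Bcol)),
      Function.Injective f ∧ Function.Surjective g ∧
      LinearMap.range f = LinearMap.ker g ∧
      -- `f` is induced by the inclusion `N₀ ↪ C`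
      (∀ (x : M) (hx : x ∈ ZN1) (hx' : x ∈ Z1),
        f (Submodule.Quotient.mk ⟨x, hx⟩) = Submodule.Quotient.mk ⟨x, hx'⟩) ∧
      -- `g` is induced by the projection `π₁` onto the (0,1)-component
      (∀ (x : M) (hx : x ∈ Z1) (hx' : bproj 𝒞 1 x ∈ Kρ),
        g (Submodule.Quotient.mk ⟨x, hx⟩) =
          Submodule.Quotient.mk ⟨bproj 𝒞 1 x, hx'⟩) := by
  classical
  -- basic helpers
  have hzero : ∀ {p q : ℤ} {x : M}, x ∈ 𝒞 (p, q) → (p < 0 ∨ q < 0) → x = 0 := by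
    intro p q x hx h
    rw [hfq p q h] at hx
    simpa using hx
  have m21 : ∀ {p q p' q' : ℤ} {x : M}, x ∈ 𝒞 (p, q) → p' = p + 2 → q' = q - 1 →
      D21 x ∈ 𝒞 (p', q') := by
    rintro p q p' q' x hx rfl rfl
    exact h21 _ _ (Submodule.mem_map_of_mem hx)
  have m10 : ∀ {p q p' q' : ℤ} {x : M}, x ∈ 𝒞 (p, q) → p' = p + 1 → q' = q →
      D10 x ∈ 𝒞 (p', q') := by
    rintro p q p' q' x hx rfl rfl
    exact h10 _ _ (Submodule.mem_map_of_mem hx)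
  have m01 : ∀ {p q p' q' : ℤ} {x : M}, x ∈ 𝒞 (p, q) → p' = p → q' = q + 1 →
      D01 x ∈ 𝒞 (p', q') := by
    rintro p q p' q' x hx rfl rfl
    exact h01 _ _ (Submodule.mem_map_of_mem hx)
  have hDapp : ∀ y : M, D y = D21 y + D10 y + D01 y := by
    intro y; rw [hDdef]; rfl
  have hDD : ∀ y : M, D (D y) = 0 := by
    intro y
    have := LinearMap.ext_iff.mp hD y
    simpa using this
  -- descriptions of the total-degree pieces
  have hdeg1 : bdeg 𝒞 1 = 𝒞 (1, 0) ⊔ 𝒞 (0, 1) := by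
    unfold bdeg
    apply le_antisymm
    · apply iSup_le
      intro p
      rcases eq_or_ne p 1 with rfl | hp1
      · rw [show (1 : ℤ) - 1 = 0 by norm_num]; exact le_sup_left
      rcases eq_or_ne p 0 with rfl | hp0
      · rw [show (1 : ℤ) - 0 = 1 by norm_num]; exact le_sup_right
      · rw [hfq p (1 - p) (by omega)]; exact bot_le
    · apply sup_le
      · have h := le_iSup (fun p : ℤ => 𝒞 (p, 1 - p)) 1
        rwa [show (1 : ℤ) - 1 = 0 by norm_num] at h
      · have h := le_iSup (fun p : ℤ => 𝒞 (p, 1 - p)) 0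
        rwa [show (1 : ℤ) - 0 = 1 by norm_num] at h
  have hdeg0 : bdeg 𝒞 0 = 𝒞 (0, 0) := by
    unfold bdeg
    apply le_antisymm
    · apply iSup_le
      intro p
      rcases eq_or_ne p 0 with rfl | hp0
      · rw [show (0 : ℤ) - 0 = 0 by norm_num]
      · rw [hfq p (0 - p) (by omega)]; exact bot_le
    · have h := le_iSup (fun p : ℤ => 𝒞 (p, 0 - p)) 0
      rwa [show (0 : ℤ) - 0 = 0 by norm_num] at h
  -- structure of elements of Z1
  have hZstruct : ∀ x : M, x ∈ Z1 →
      bproj 𝒞 1 x ∈ 𝒞 (0, 1) ∧ (x - bproj 𝒞 1 x) ∈ 𝒞 (1, 0) ∧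
      D01 (bproj 𝒞 1 x) = 0 ∧
      D01 (x - bproj 𝒞 1 x) + D10 (bproj 𝒞 1 x) = 0 ∧
      D21 (bproj 𝒞 1 x) + D10 (x - bproj 𝒞 1 x) = 0 := by
    intro x hx
    rw [hZ1, Submodule.mem_inf] at hx
    obtain ⟨hx1, hx2⟩ := hx
    rw [hdeg1, Submodule.mem_sup] at hx1
    obtain ⟨a, ha, b, hb, rfl⟩ := hx1
    have hb1 : bproj 𝒞 1 (a + b) = b := by
      rw [map_add, bproj_of_mem 𝒞 ha, bproj_of_mem 𝒞 hb,
        if_neg (by norm_num : ¬(1 : ℤ) ≤ 0), if_pos le_rfl, zero_add]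
    have hab : a + b - b = a := add_sub_cancel_right a b
    rw [hb1, hab]
    have hza : D21 a = 0 := hzero (show D21 a ∈ 𝒞 (3, -1) from m21 ha (by norm_num) (by norm_num)) (Or.inr (by norm_num))
    have hE : (D21 b + D10 a) + (D01 a + D10 b) + D01 b = 0 := by
      have h1 : D (a + b) = 0 := LinearMap.mem_ker.mp hx2
      rw [map_add, hDapp a, hDapp b, hza, zero_add] at h1
      rw [← h1]; abel
    obtain ⟨e1, e2, e3⟩ := comp3_zero 𝒞
      (show D21 b + D10 a ∈ 𝒞 (2, 0) from add_mem
        (m21 hb (by norm_num) (by norm_num)) (m10 ha (by norm_num) (by norm_num)))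
      (show D01 a + D10 b ∈ 𝒞 (1, 1) from add_mem
        (m01 ha (by norm_num) (by norm_num)) (m10 hb (by norm_num) (by norm_num)))
      (show D01 b ∈ 𝒞 (0, 2) from m01 hb (by norm_num) (by norm_num))
      (by decide) (by decide) (by decide) hE
    exact ⟨hb, ha, e3, e2, e1⟩
  -- building elements of Z1
  have hZbuild : ∀ a b : M, a ∈ 𝒞 (1, 0) → b ∈ 𝒞 (0, 1) → D01 b = 0 →
      D01 a + D10 b = 0 → D21 b + D10 a = 0 → (a + b ∈ Z1 ∧ bproj 𝒞 1 (a + b) = b) := by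
    intro a b ha hb e3 e2 e1
    constructor
    · rw [hZ1, Submodule.mem_inf]
      constructor
      · rw [hdeg1]; exact Submodule.mem_sup.mpr ⟨a, ha, b, hb, rfl⟩
      · have hza : D21 a = 0 := hzero (show D21 a ∈ 𝒞 (3, -1) from m21 ha (by norm_num) (by norm_num)) (Or.inr (by norm_num))
        have hexp : D (a + b) = D21 a + ((D21 b + D10 a) + ((D01 a + D10 b) + D01 b)) := by
          rw [map_add, hDapp a, hDapp b]; abel
        rw [LinearMap.mem_ker, hexp, hza, e1, e2, e3]
        simp
    · rw [map_add, bproj_of_mem 𝒞 ha, bproj_of_mem 𝒞 hb,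
        if_neg (by norm_num : ¬(1 : ℤ) ≤ 0), if_pos le_rfl, zero_add]
  -- D² equations on C^{0,0}
  have hDsq : ∀ w : M, w ∈ 𝒞 (0, 0) → D w = D10 w + D01 w ∧
      D10 (D10 w) + D21 (D01 w) = 0 ∧ D01 (D10 w) + D10 (D01 w) = 0 := by
    intro w hw
    have hz21 : D21 w = 0 := hzero (show D21 w ∈ 𝒞 (2, -1) from m21 hw (by norm_num) (by norm_num)) (Or.inr (by norm_num))
    have hDw : D w = D10 w + D01 w := by rw [hDapp w, hz21, zero_add]
    have hz31 : D21 (D10 w) = 0 := hzero (show D21 (D10 w) ∈ 𝒞 (3, -1) from m21 (show D10 w ∈ 𝒞 (1, 0) from m10 hw (by norm_num) (by norm_num)) (by norm_num) (by norm_num)) (Or.inr (by norm_num))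
    have hE : (D10 (D10 w) + D21 (D01 w)) + (D01 (D10 w) + D10 (D01 w)) + D01 (D01 w) = 0 := by
      have h1 := hDD w
      rw [hDw, map_add, hDapp (D10 w), hDapp (D01 w), hz31, zero_add] at h1
      rw [← h1]; abel
    obtain ⟨d1, d2, _⟩ := comp3_zero 𝒞
      (show D10 (D10 w) + D21 (D01 w) ∈ 𝒞 (2, 0) from add_mem
        (m10 (show D10 w ∈ 𝒞 (1, 0) from m10 hw (by norm_num) (by norm_num)) (by norm_num) (by norm_num))
        (m21 (show D01 w ∈ 𝒞 (0, 1) from m01 hw (by norm_num) (by norm_num)) (by norm_num) (by norm_num)))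
      (show D01 (D10 w) + D10 (D01 w) ∈ 𝒞 (1, 1) from add_mem
        (m01 (show D10 w ∈ 𝒞 (1, 0) from m10 hw (by norm_num) (by norm_num)) (by norm_num) (by norm_num))
        (m10 (show D01 w ∈ 𝒞 (0, 1) from m01 hw (by norm_num) (by norm_num)) (by norm_num) (by norm_num)))
      (show D01 (D01 w) ∈ 𝒞 (0, 2) from
        m01 (show D01 w ∈ 𝒞 (0, 1) from m01 hw (by norm_num) (by norm_num)) (by norm_num) (by norm_num))
      (by decide) (by decide) (by decide) hE
    exact ⟨hDw, d1, d2⟩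
  -- decomposition of elements of B1
  have hB1elt : ∀ x : M, x ∈ B1 → ∃ w : M, w ∈ 𝒞 (0, 0) ∧ x = D10 w + D01 w := by
    intro x hx
    rw [hB1, Submodule.mem_map] at hx
    obtain ⟨w, hw, rfl⟩ := hx
    rw [hdeg0] at hw
    exact ⟨w, hw, (hDsq w hw).1⟩
  -- ZN1 ≤ Z1
  have hle : ZN1 ≤ Z1 := by
    intro x hx
    rw [hZN1, Submodule.mem_inf, Submodule.mem_inf] at hx
    obtain ⟨⟨hx10, hxk10⟩, hxk01⟩ := hx
    rw [hZ1, Submodule.mem_inf]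
    constructor
    · rw [hdeg1]; exact Submodule.mem_sup_left hx10
    · rw [LinearMap.mem_ker, hDapp x,
        hzero (show D21 x ∈ 𝒞 (3, -1) from m21 hx10 (by norm_num) (by norm_num)) (Or.inr (by norm_num)),
        LinearMap.mem_ker.mp hxk10, LinearMap.mem_ker.mp hxk01]
      simp
  -- BN1 ≤ B1
  have hBN1le : BN1 ≤ B1 := by
    intro x hx
    rw [hBN1, Submodule.mem_map] at hx
    obtain ⟨w, hw', rfl⟩ := hx
    rw [Submodule.mem_inf] at hw'
    obtain ⟨hw, hw01⟩ := hw'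
    rw [hB1, Submodule.mem_map]
    refine ⟨w, by rw [hdeg0]; exact hw, ?_⟩
    rw [(hDsq w hw).1, LinearMap.mem_ker.mp hw01, add_zero]
  -- the first map f
  let f : (↥ZN1 ⧸ Submodule.comap ZN1.subtype BN1) →ₗ[R]
      (↥Z1 ⧸ Submodule.comap Z1.subtype B1) :=
    Submodule.mapQ _ _ (Submodule.inclusion hle)
      (by intro z hz; exact hBN1le hz)
  -- membership of projections in Kρ
  have hKmem : ∀ y : M, y ∈ Kρ ↔ (y ∈ 𝒞 (0, 1) ∧ D01 y = 0 ∧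
      ∃ α ∈ 𝒞 (1, 0), D01 α + D10 y = 0 ∧
        D21 y + D10 α ∈ Submodule.map D10 (𝒞 (1, 0) ⊓ LinearMap.ker D01)) := by
    intro y
    have h := Set.ext_iff.mp hKρ y
    simpa [SetLike.mem_coe, Set.mem_setOf_eq] using h
  have hπmem : ∀ z : ↥Z1, bproj 𝒞 1 (z : M) ∈ Kρ := by
    intro z
    obtain ⟨hb, ha, e3, e2, e1⟩ := hZstruct (z : M) z.2
    rw [hKmem]
    exact ⟨hb, e3, (z : M) - bproj 𝒞 1 (z : M), ha, e2, by rw [e1]; exact Submodule.zero_mem _⟩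
  let π : ↥Z1 →ₗ[R] ↥Kρ :=
    LinearMap.codRestrict Kρ ((bproj 𝒞 1).comp Z1.subtype) hπmem
  have hgcond : Submodule.comap Z1.subtype B1 ≤
      Submodule.comap π (Submodule.comap Kρ.subtype Bcol) := by
    intro z hz
    have hzB : (z : M) ∈ B1 := hz
    obtain ⟨w, hw, hweq⟩ := hB1elt _ hzB
    show bproj 𝒞 1 (z : M) ∈ Bcol
    rw [hweq, map_add, bproj_of_mem 𝒞 (show D10 w ∈ 𝒞 (1, 0) from m10 hw (by norm_num) (by norm_num)) 1,
      bproj_of_mem 𝒞 (show D01 w ∈ 𝒞 (0, 1) from m01 hw (by norm_num) (by norm_num)) 1,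
      if_neg (by norm_num : ¬(1 : ℤ) ≤ 0), if_pos le_rfl, zero_add]
    rw [hBcol]
    exact Submodule.mem_map_of_mem hw
  let g : (↥Z1 ⧸ Submodule.comap Z1.subtype B1) →ₗ[R]
      (↥Kρ ⧸ Submodule.comap Kρ.subtype Bcol) :=
    Submodule.mapQ _ _ π hgcond
  have hz10of : ∀ x : M, x ∈ ZN1 → x ∈ 𝒞 (1, 0) := by
    intro x hx
    rw [hZN1, Submodule.mem_inf, Submodule.mem_inf] at hx
    exact hx.1.1
  refine ⟨f, g, ?_, ?_, ?_, ?_, ?_⟩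
  · -- injectivity of f
    have hkey : ∀ x : M, x ∈ ZN1 → x ∈ B1 → x ∈ BN1 := by
      intro x hxZ hxB
      have hx10 : x ∈ 𝒞 (1, 0) := hz10of x hxZ
      obtain ⟨w, hw, hweq⟩ := hB1elt _ hxB
      have hsum : (x - D10 w) + (-(D01 w)) = 0 := by
        rw [hweq]; abel
      obtain ⟨c1, c2⟩ := comp2_zero 𝒞
        (show x - D10 w ∈ 𝒞 (1, 0) from
          sub_mem hx10 (m10 hw (by norm_num) (by norm_num)))
        (show -(D01 w) ∈ 𝒞 (0, 1) from neg_mem (m01 hw (by norm_num) (by norm_num)))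
        (by decide) hsum
      rw [hBN1, Submodule.mem_map]
      exact ⟨w, Submodule.mem_inf.mpr ⟨hw, LinearMap.mem_ker.mpr (neg_eq_zero.mp c2)⟩,
        (sub_eq_zero.mp c1).symm⟩
    have hker : ∀ c, f c = 0 → c = 0 := by
      intro c hc
      obtain ⟨z, rfl⟩ := Submodule.Quotient.mk_surjective _ c
      have hc' : (Submodule.Quotient.mk (Submodule.inclusion hle z) :
          ↥Z1 ⧸ Submodule.comap Z1.subtype B1) = 0 := hc
      rw [Submodule.Quotient.mk_eq_zero] at hc'
      rw [Submodule.Quotient.mk_eq_zero]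
      show (z : M) ∈ BN1
      exact hkey (z : M) z.2 hc'
    intro c1 c2 hc
    have h := hker (c1 - c2) (by rw [map_sub, hc, sub_self])
    exact sub_eq_zero.mp h
  · -- surjectivity of g
    intro c
    obtain ⟨y, rfl⟩ := Submodule.Quotient.mk_surjective _ c
    obtain ⟨hY01, hYd, α, hα, h1, h2⟩ := (hKmem (y : M)).mp y.2
    rw [Submodule.mem_map] at h2
    obtain ⟨β, hβm, hβeq⟩ := h2
    rw [Submodule.mem_inf] at hβm
    obtain ⟨hβ10, hβk⟩ := hβm
    have hβ01 : D01 β = 0 := LinearMap.mem_ker.mp hβk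
    have ha : α - β ∈ 𝒞 (1, 0) := sub_mem hα hβ10
    have e2 : D01 (α - β) + D10 (y : M) = 0 := by
      rw [map_sub, hβ01, sub_zero]; exact h1
    have e1 : D21 (y : M) + D10 (α - β) = 0 := by
      rw [map_sub, hβeq]; abel
    obtain ⟨hxZ, hxproj⟩ := hZbuild (α - β) (y : M) ha hY01 hYd e2 e1
    refine ⟨Submodule.Quotient.mk ⟨α - β + (y : M), hxZ⟩, ?_⟩
    show (Submodule.Quotient.mk (π ⟨α - β + (y : M), hxZ⟩) :
        ↥Kρ ⧸ Submodule.comap Kρ.subtype Bcol) = Submodule.Quotient.mk y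
    exact congrArg _ (Subtype.ext hxproj)
  · -- range f = ker g
    ext c
    constructor
    · rintro ⟨d, rfl⟩
      obtain ⟨z, rfl⟩ := Submodule.Quotient.mk_surjective _ d
      have hz10 : (z : M) ∈ 𝒞 (1, 0) := hz10of (z : M) z.2
      rw [LinearMap.mem_ker]
      show (Submodule.Quotient.mk (π (Submodule.inclusion hle z)) :
          ↥Kρ ⧸ Submodule.comap Kρ.subtype Bcol) = 0
      rw [Submodule.Quotient.mk_eq_zero]
      show bproj 𝒞 1 (z : M) ∈ Bcol
      rw [bproj_of_mem 𝒞 hz10 1, if_neg (by norm_num : ¬(1 : ℤ) ≤ 0)]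
      exact Submodule.zero_mem _
    · intro hc
      obtain ⟨x, rfl⟩ := Submodule.Quotient.mk_surjective _ c
      rw [LinearMap.mem_ker] at hc
      have hc' : (Submodule.Quotient.mk (π x) :
          ↥Kρ ⧸ Submodule.comap Kρ.subtype Bcol) = 0 := hc
      rw [Submodule.Quotient.mk_eq_zero] at hc'
      have hcB : bproj 𝒞 1 (x : M) ∈ Bcol := hc'
      rw [hBcol, Submodule.mem_map] at hcB
      obtain ⟨w, hw, hweq⟩ := hcB
      obtain ⟨hb, ha, e3, e2, e1⟩ := hZstruct (x : M) x.2
      obtain ⟨hDw, d1, d2⟩ := hDsq w hw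
      have hx'10 : (x : M) - bproj 𝒞 1 (x : M) - D10 w ∈ 𝒞 (1, 0) :=
        sub_mem ha (m10 hw (by norm_num) (by norm_num))
      have h10x' : D10 ((x : M) - bproj 𝒞 1 (x : M) - D10 w) = 0 := by
        rw [map_sub, eq_neg_of_add_eq_zero_left d1, hweq, sub_neg_eq_add, add_comm]
        exact e1
      have h01x' : D01 ((x : M) - bproj 𝒞 1 (x : M) - D10 w) = 0 := by
        rw [map_sub, eq_neg_of_add_eq_zero_left d2, hweq, sub_neg_eq_add]
        exact e2
      have hx'ZN1 : (x : M) - bproj 𝒞 1 (x : M) - D10 w ∈ ZN1 := by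
        rw [hZN1, Submodule.mem_inf, Submodule.mem_inf]
        exact ⟨⟨hx'10, LinearMap.mem_ker.mpr h10x'⟩, LinearMap.mem_ker.mpr h01x'⟩
      refine ⟨Submodule.Quotient.mk ⟨(x : M) - bproj 𝒞 1 (x : M) - D10 w, hx'ZN1⟩, ?_⟩
      show (Submodule.Quotient.mk (Submodule.inclusion hle
          ⟨(x : M) - bproj 𝒞 1 (x : M) - D10 w, hx'ZN1⟩) :
          ↥Z1 ⧸ Submodule.comap Z1.subtype B1) = Submodule.Quotient.mk x
      rw [Submodule.Quotient.eq]
      show ((x : M) - bproj 𝒞 1 (x : M) - D10 w) - (x : M) ∈ B1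
      have heq : ((x : M) - bproj 𝒞 1 (x : M) - D10 w) - (x : M) = -(D w) := by
        rw [hDw, hweq]; abel
      rw [heq]
      refine neg_mem ?_
      rw [hB1]
      exact Submodule.mem_map_of_mem (by rw [hdeg0]; exact hw)
  · -- f is induced by inclusion
    intro x hx hx'
    rfl
  · -- g is induced by bproj
    intro x hx hx'
    rfl
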